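/- Let α ∈ ℂ \ {0, 1} and Ω ∈ ℂ, and let R₁(z) = (12z³ + 4(1 − 5α + 4Ω)z² + α(5α − 4 − 16Ω)z + 3α²)/(16z²(z − 1)(z − α)²). Define u(z) = (1/2)(1/z + 4/(z − 1) + 1/(z − α)). If the identity u''(z) + 3u(z)u'(z) + u(z)³ − 4u(z)R₁(z) = 2R₁'(z) holds for every z ∈ ℂ \ {0, 1, α}, then Ω = 0. -/

import Mathlib

set_option maxHeartbeats 4000000

lemma hasDerivAt_u' (α w : ℂ) (h0 : w ≠ 0) (h1 : w - 1 ≠ 0) (h2 : w - α ≠ 0) :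
    HasDerivAt (fun z : ℂ => (1 / 2) * (1 / z + 4 / (z - 1) + 1 / (z - α)))
      (-(1 / 2) * (1 / w ^ 2 + 4 / (w - 1) ^ 2 + 1 / (w - α) ^ 2)) w := by
  have d1 := (hasDerivAt_const w (1:ℂ)).div (hasDerivAt_id' w) h0
  have d2 := (hasDerivAt_const w (4:ℂ)).div ((hasDerivAt_id' w).sub_const 1) h1
  have d3 := (hasDerivAt_const w (1:ℂ)).div ((hasDerivAt_id' w).sub_const α) h2
  have := ((d1.add d2).add d3).const_mul (1/2 : ℂ)
  refine this.congr_deriv ?_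
  ring

lemma hasDerivAt_g' (α w : ℂ) (h0 : w ≠ 0) (h1 : w - 1 ≠ 0) (h2 : w - α ≠ 0) :
    HasDerivAt (fun z : ℂ => -(1 / 2) * (1 / z ^ 2 + 4 / (z - 1) ^ 2 + 1 / (z - α) ^ 2))
      (1 / w ^ 3 + 4 / (w - 1) ^ 3 + 1 / (w - α) ^ 3) w := by
  have d1 := (hasDerivAt_const w (1:ℂ)).div (hasDerivAt_pow 2 w) (pow_ne_zero 2 h0)
  have d2 := (hasDerivAt_const w (4:ℂ)).div (((hasDerivAt_id' w).sub_const 1).pow 2)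
    (pow_ne_zero 2 h1)
  have d3 := (hasDerivAt_const w (1:ℂ)).div (((hasDerivAt_id' w).sub_const α).pow 2)
    (pow_ne_zero 2 h2)
  have := ((d1.add d2).add d3).const_mul (-(1/2) : ℂ)
  refine this.congr_deriv ?_
  simp only [Pi.pow_apply, Pi.mul_apply, Pi.add_apply]
  rw [show ((0 * w ^ 2 - 1 * (↑(2:ℕ) * w ^ (2 - 1))) / (w ^ 2) ^ 2 : ℂ) = (-2) / w ^ 3 from by
      rw [div_eq_div_iff (pow_ne_zero 2 (pow_ne_zero 2 h0)) (pow_ne_zero 3 h0)]; push_cast; ring,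
    show ((0 * (w - 1) ^ 2 - 4 * (↑(2:ℕ) * (w - 1) ^ (2 - 1) * 1)) / ((w - 1) ^ 2) ^ 2 : ℂ)
        = (-8) / (w - 1) ^ 3 from by
      rw [div_eq_div_iff (pow_ne_zero 2 (pow_ne_zero 2 h1)) (pow_ne_zero 3 h1)]; push_cast; ring,
    show ((0 * (w - α) ^ 2 - 1 * (↑(2:ℕ) * (w - α) ^ (2 - 1) * 1)) / ((w - α) ^ 2) ^ 2 : ℂ)
        = (-2) / (w - α) ^ 3 from by
      rw [div_eq_div_iff (pow_ne_zero 2 (pow_ne_zero 2 h2)) (pow_ne_zero 3 h2)]; push_cast; ring]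
  ring

lemma hasDerivAt_R' (α Ω w : ℂ) (h0 : w ≠ 0) (h1 : w - 1 ≠ 0) (h2 : w - α ≠ 0) :
    HasDerivAt (fun z : ℂ => (12 * z ^ 3 + 4 * (1 - 5 * α + 4 * Ω) * z ^ 2
        + α * (5 * α - 4 - 16 * Ω) * z + 3 * α ^ 2)
      / (16 * z ^ 2 * (z - 1) * (z - α) ^ 2))
      (((36 * w ^ 2 + 8 * (1 - 5 * α + 4 * Ω) * w + α * (5 * α - 4 - 16 * Ω))
          * (16 * w ^ 2 * (w - 1) * (w - α) ^ 2)
        - (12 * w ^ 3 + 4 * (1 - 5 * α + 4 * Ω) * w ^ 2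
            + α * (5 * α - 4 - 16 * Ω) * w + 3 * α ^ 2)
          * (32 * w * (w - 1) * (w - α) ^ 2 + 16 * w ^ 2 * (w - α) ^ 2
            + 32 * w ^ 2 * (w - 1) * (w - α)))
      / (16 * w ^ 2 * (w - 1) * (w - α) ^ 2) ^ 2) w := by
  have hP := ((((hasDerivAt_pow 3 w).const_mul 12).add
      ((hasDerivAt_pow 2 w).const_mul (4 * (1 - 5 * α + 4 * Ω)))).add
      ((hasDerivAt_id' w).const_mul (α * (5 * α - 4 - 16 * Ω)))).add_const (3 * α ^ 2)
  have hQ := (((hasDerivAt_pow 2 w).const_mul 16).mul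
      ((hasDerivAt_id' w).sub_const 1)).mul (((hasDerivAt_id' w).sub_const α).pow 2)
  have hQne : (16 * w ^ 2 * (w - 1) * (w - α) ^ 2 : ℂ) ≠ 0 := by
    apply mul_ne_zero (mul_ne_zero (mul_ne_zero _ (pow_ne_zero 2 h0)) h1) (pow_ne_zero 2 h2)
    norm_num
  have := hP.div hQ hQne
  refine this.congr_deriv ?_
  simp only [Pi.pow_apply, Pi.mul_apply, Pi.add_apply]
  rw [div_eq_div_iff (pow_ne_zero 2 hQne) (pow_ne_zero 2 hQne)]
  push_cast
  ring

lemma key2 (α Ω : ℂ) (hα : (2:ℂ) - α ≠ 0)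
    (h :
      (1 / (2:ℂ) ^ 3 + 4 / (2 - 1) ^ 3 + 1 / (2 - α) ^ 3)
        + 3 * ((1 / 2) * (1 / 2 + 4 / (2 - 1) + 1 / (2 - α)))
            * (-(1 / 2) * (1 / 2 ^ 2 + 4 / (2 - 1) ^ 2 + 1 / (2 - α) ^ 2))
        + ((1 / 2) * (1 / 2 + 4 / (2 - 1) + 1 / (2 - α))) ^ 3
        - 4 * ((1 / 2) * (1 / 2 + 4 / (2 - 1) + 1 / (2 - α)))
            * ((12 * 2 ^ 3 + 4 * (1 - 5 * α + 4 * Ω) * 2 ^ 2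
                + α * (5 * α - 4 - 16 * Ω) * 2 + 3 * α ^ 2)
              / (16 * 2 ^ 2 * (2 - 1) * (2 - α) ^ 2))
      = 2 * (((36 * 2 ^ 2 + 8 * (1 - 5 * α + 4 * Ω) * 2 + α * (5 * α - 4 - 16 * Ω))
              * (16 * 2 ^ 2 * (2 - 1) * (2 - α) ^ 2)
            - (12 * 2 ^ 3 + 4 * (1 - 5 * α + 4 * Ω) * 2 ^ 2
                + α * (5 * α - 4 - 16 * Ω) * 2 + 3 * α ^ 2)
              * (32 * 2 * (2 - 1) * (2 - α) ^ 2 + 16 * 2 ^ 2 * (2 - α) ^ 2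
                + 32 * 2 ^ 2 * (2 - 1) * (2 - α)))
          / (16 * 2 ^ 2 * (2 - 1) * (2 - α) ^ 2) ^ 2)) :
    Ω = 0 := by
  obtain ⟨t, rfl⟩ : ∃ t, α = 2 - t := ⟨2 - α, by ring⟩
  have ht : t ≠ 0 := by simpa using hα
  have h2 : (2:ℂ) - (2 - t) = t := by ring
  rw [h2] at h
  norm_num at h
  field_simp at h
  have h9 : Ω * t ^ 2 = 0 := by linear_combination h / (-25165824)
  rcases mul_eq_zero.1 h9 with h10 | h10
  · exact h10
  · exact absurd h10 (pow_ne_zero _ ht)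

lemma key3 (Ω : ℂ)
    (h :
      (1 / (3:ℂ) ^ 3 + 4 / (3 - 1) ^ 3 + 1 / (3 - 2) ^ 3)
        + 3 * ((1 / 2) * (1 / 3 + 4 / (3 - 1) + 1 / (3 - 2)))
            * (-(1 / 2) * (1 / 3 ^ 2 + 4 / (3 - 1) ^ 2 + 1 / (3 - 2) ^ 2))
        + ((1 / 2) * (1 / 3 + 4 / (3 - 1) + 1 / (3 - 2))) ^ 3
        - 4 * ((1 / 2) * (1 / 3 + 4 / (3 - 1) + 1 / (3 - 2)))
            * ((12 * 3 ^ 3 + 4 * (1 - 5 * 2 + 4 * Ω) * 3 ^ 2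
                + 2 * (5 * 2 - 4 - 16 * Ω) * 3 + 3 * 2 ^ 2)
              / (16 * 3 ^ 2 * (3 - 1) * (3 - 2) ^ 2))
      = 2 * (((36 * 3 ^ 2 + 8 * (1 - 5 * 2 + 4 * Ω) * 3 + 2 * (5 * 2 - 4 - 16 * Ω))
              * (16 * 3 ^ 2 * (3 - 1) * (3 - 2) ^ 2)
            - (12 * 3 ^ 3 + 4 * (1 - 5 * 2 + 4 * Ω) * 3 ^ 2
                + 2 * (5 * 2 - 4 - 16 * Ω) * 3 + 3 * 2 ^ 2)
              * (32 * 3 * (3 - 1) * (3 - 2) ^ 2 + 16 * 3 ^ 2 * (3 - 2) ^ 2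
                + 32 * 3 ^ 2 * (3 - 1) * (3 - 2)))
          / (16 * 3 ^ 2 * (3 - 1) * (3 - 2) ^ 2) ^ 2)) :
    Ω = 0 := by
  norm_num at h
  linear_combination h * (-2)

theorem kovacic_case_two_forces_Omega_zero
    (α Ω : ℂ) (hα0 : α ≠ 0) (hα1 : α ≠ 1)
    (R₁ u : ℂ → ℂ)
    (hR₁ : R₁ = fun z => (12 * z ^ 3 + 4 * (1 - 5 * α + 4 * Ω) * z ^ 2
        + α * (5 * α - 4 - 16 * Ω) * z + 3 * α ^ 2)
      / (16 * z ^ 2 * (z - 1) * (z - α) ^ 2))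
    (hu : u = fun z => (1 / 2) * (1 / z + 4 / (z - 1) + 1 / (z - α)))
    (hId : ∀ z : ℂ, z ≠ 0 → z ≠ 1 → z ≠ α →
      deriv (deriv u) z + 3 * u z * deriv u z + u z ^ 3 - 4 * u z * R₁ z
        = 2 * deriv R₁ z) :
    Ω = 0 := by
  subst hR₁ hu
  -- choose an evaluation point z avoiding {0, 1, α}
  by_cases hA : α = 2
  · -- use z = 3
    subst hA
    have hz0 : (3:ℂ) ≠ 0 := by norm_num
    have hz1 : (3:ℂ) ≠ 1 := by norm_num
    have hzα : (3:ℂ) ≠ 2 := by norm_num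
    have h0' : (3:ℂ) - 0 ≠ 0 := by norm_num
    have h1' : (3:ℂ) - 1 ≠ 0 := by norm_num
    have h2' : (3:ℂ) - 2 ≠ 0 := by norm_num
    have hdu : deriv (fun z : ℂ => (1 / 2) * (1 / z + 4 / (z - 1) + 1 / (z - 2))) 3
        = -(1 / 2) * (1 / (3:ℂ) ^ 2 + 4 / (3 - 1) ^ 2 + 1 / (3 - 2) ^ 2) :=
      (hasDerivAt_u' 2 3 hz0 h1' h2').deriv
    have hev : deriv (fun z : ℂ => (1 / 2) * (1 / z + 4 / (z - 1) + 1 / (z - 2)))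
        =ᶠ[nhds (3:ℂ)] fun w => -(1 / 2) * (1 / w ^ 2 + 4 / (w - 1) ^ 2 + 1 / (w - 2) ^ 2) := by
      filter_upwards [eventually_ne_nhds hz0, eventually_ne_nhds hz1, eventually_ne_nhds hzα]
        with w e0 e1 e2
      exact (hasDerivAt_u' 2 w e0 (sub_ne_zero.2 e1) (sub_ne_zero.2 e2)).deriv
    have hdd : deriv (deriv (fun z : ℂ => (1 / 2) * (1 / z + 4 / (z - 1) + 1 / (z - 2)))) 3
        = 1 / (3:ℂ) ^ 3 + 4 / (3 - 1) ^ 3 + 1 / (3 - 2) ^ 3 := by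
      rw [hev.deriv_eq]
      exact (hasDerivAt_g' 2 3 hz0 h1' h2').deriv
    have hdR := (hasDerivAt_R' 2 Ω 3 hz0 h1' h2').deriv
    have h := hId 3 hz0 hz1 hzα
    rw [hdd, hdR, hdu] at h
    simp only at h
    exact key3 Ω h
  · -- use z = 2
    have hz0 : (2:ℂ) ≠ 0 := by norm_num
    have hz1 : (2:ℂ) ≠ 1 := by norm_num
    have hzα : (2:ℂ) ≠ α := fun h => hA h.symm
    have h1' : (2:ℂ) - 1 ≠ 0 := by norm_num
    have h2' : (2:ℂ) - α ≠ 0 := sub_ne_zero.2 hzα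
    have hdu : deriv (fun z : ℂ => (1 / 2) * (1 / z + 4 / (z - 1) + 1 / (z - α))) 2
        = -(1 / 2) * (1 / (2:ℂ) ^ 2 + 4 / (2 - 1) ^ 2 + 1 / (2 - α) ^ 2) :=
      (hasDerivAt_u' α 2 hz0 h1' h2').deriv
    have hev : deriv (fun z : ℂ => (1 / 2) * (1 / z + 4 / (z - 1) + 1 / (z - α)))
        =ᶠ[nhds (2:ℂ)] fun w => -(1 / 2) * (1 / w ^ 2 + 4 / (w - 1) ^ 2 + 1 / (w - α) ^ 2) := by
      filter_upwards [eventually_ne_nhds hz0, eventually_ne_nhds hz1, eventually_ne_nhds hzα]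
        with w e0 e1 e2
      exact (hasDerivAt_u' α w e0 (sub_ne_zero.2 e1) (sub_ne_zero.2 e2)).deriv
    have hdd : deriv (deriv (fun z : ℂ => (1 / 2) * (1 / z + 4 / (z - 1) + 1 / (z - α)))) 2
        = 1 / (2:ℂ) ^ 3 + 4 / (2 - 1) ^ 3 + 1 / (2 - α) ^ 3 := by
      rw [hev.deriv_eq]
      exact (hasDerivAt_g' α 2 hz0 h1' h2').deriv
    have hdR := (hasDerivAt_R' α Ω 2 hz0 h1' h2').deriv
    have h := hId 2 hz0 hz1 hzα
    rw [hdd, hdR, hdu] at h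
    simp only at h
    exact key2 α Ω h2' h
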